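/- Let (x_i) be a sequence in ℝ^k (k ∈ ℕ) such that the series ∑_i x_i is absolutely convergent, and let n ∈ ℕ. Then S(F_n) ⊆ S(F_{n+1}) ⊆ S(E(x_i)) and S(E_{n+1}) ⊆ S(E_n) ⊆ S(E(x_i)). -/

import Mathlib

/-- The spectre of a set `A` in an abelian group. -/
def spectre {X : Type*} [AddCommGroup X] (A : Set X) : Set X :=
  {z | ∀ x ∈ A, x + z ∈ A ∨ x - z ∈ A}

/-- The achievement set of a series: the set of all its subsums. -/
def achievementSet {X : Type*} [AddCommGroup X] [TopologicalSpace X] (x : ℕ → X) : Set X :=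
  {y | ∃ A : Set ℕ, y = ∑' i : A, x i}

/-- The set of `n`-initial subsums: sums over sets of indices among the first `n`. -/
def initialSubsums {X : Type*} [AddCommGroup X] [TopologicalSpace X]
    (x : ℕ → X) (n : ℕ) : Set X :=
  {y | ∃ A : Set ℕ, A ⊆ {i | i < n} ∧ y = ∑' i : A, x i}

/-- The set of subsums of the `n`-th remainder of the series. -/
def remainderSubsums {X : Type*} [AddCommGroup X] [TopologicalSpace X]
    (x : ℕ → X) (n : ℕ) : Set X :=
  {y | ∃ A : Set ℕ, A ⊆ {i | n ≤ i} ∧ y = ∑' i : A, x i}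

/-- Subsums over index sets contained in `D`. -/
def subsumsOver {X : Type*} [AddCommGroup X] [TopologicalSpace X]
    (x : ℕ → X) (D : Set ℕ) : Set X :=
  {y | ∃ A : Set ℕ, A ⊆ D ∧ y = ∑' i : A, x i}

lemma spectre_subsumsOver_mono {X : Type*} [AddCommGroup X] [UniformSpace X]
    [IsUniformAddGroup X] [T2Space X] [CompleteSpace X] (x : ℕ → X) (hx : Summable x) (D1 D2 : Set ℕ)
    (hd : Disjoint D1 D2) :
    spectre (subsumsOver x D2) ⊆ spectre (subsumsOver x (D1 ∪ D2)) := by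
  intro z hz y hy
  obtain ⟨A, hA, rfl⟩ := hy
  set A1 := A ∩ D1 with hA1
  set A2 := A ∩ D2 with hA2
  have hAeq : A = A1 ∪ A2 := by
    rw [hA1, hA2, ← Set.inter_union_distrib_left, Set.inter_eq_left.mpr hA]
  have hdisj : Disjoint A1 A2 := hd.mono Set.inter_subset_right Set.inter_subset_right
  have hsum : (∑' i : A, x i) = (∑' i : A1, x i) + ∑' i : A2, x i := by
    rw [hAeq]
    exact Summable.tsum_union_disjoint (f := x) hdisj (hx.subtype A1) (hx.subtype A2)
  have hr : (∑' i : A2, x i) ∈ subsumsOver x D2 := ⟨A2, Set.inter_subset_right, rfl⟩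
  have key : ∀ B : Set ℕ, B ⊆ D2 →
      (∑' i : A1, x i) + ∑' i : B, x i ∈ subsumsOver x (D1 ∪ D2) := by
    intro B hB
    refine ⟨A1 ∪ B, Set.union_subset_union Set.inter_subset_right hB,
      (Summable.tsum_union_disjoint (f := x) (hd.mono Set.inter_subset_right hB) (hx.subtype A1)
        (hx.subtype B)).symm⟩
  rcases hz _ hr with h | h
  · left
    obtain ⟨B, hB, hBeq⟩ := h
    have := key B hB
    rwa [hsum, add_assoc, hBeq]
  · right
    obtain ⟨B, hB, hBeq⟩ := h
    have := key B hB
    rwa [hsum, add_sub_assoc, hBeq]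

lemma achievementSet_eq {X : Type*} [AddCommGroup X] [TopologicalSpace X] (x : ℕ → X) :
    achievementSet x = subsumsOver x Set.univ := by
  ext y
  simp [achievementSet, subsumsOver]

lemma initialSubsums_eq {X : Type*} [AddCommGroup X] [TopologicalSpace X] (x : ℕ → X) (n : ℕ) :
    initialSubsums x n = subsumsOver x {i | i < n} := rfl

lemma remainderSubsums_eq {X : Type*} [AddCommGroup X] [TopologicalSpace X] (x : ℕ → X) (n : ℕ) :
    remainderSubsums x n = subsumsOver x {i | n ≤ i} := rfl

theorem spectre_initial_remainder_subsums (k : ℕ) (x : ℕ → EuclideanSpace ℝ (Fin k))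
    (hx : Summable fun i => ‖x i‖) (n : ℕ) :
    spectre (initialSubsums x n) ⊆ spectre (initialSubsums x (n + 1)) ∧
    spectre (initialSubsums x (n + 1)) ⊆ spectre (achievementSet x) ∧
    spectre (remainderSubsums x (n + 1)) ⊆ spectre (remainderSubsums x n) ∧
    spectre (remainderSubsums x n) ⊆ spectre (achievementSet x) := by
  have hs : Summable x := Summable.of_norm hx
  refine ⟨?_, ?_, ?_, ?_⟩
  · rw [initialSubsums_eq, initialSubsums_eq]
    have h : {i : ℕ | i < n + 1} = {n} ∪ {i | i < n} := by
      ext i; simp [Nat.lt_succ_iff_lt_or_eq, or_comm]; exact Nat.le_iff_lt_or_eq.trans or_comm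
    rw [h]
    exact spectre_subsumsOver_mono x hs _ _ (by simp [Set.disjoint_left])
  · rw [initialSubsums_eq, achievementSet_eq]
    have h : (Set.univ : Set ℕ) = {i | n + 1 ≤ i} ∪ {i | i < n + 1} := by
      ext i; simp [le_or_gt, lt_or_ge]
    rw [h]
    exact spectre_subsumsOver_mono x hs _ _
      (by simp [Set.disjoint_left])
  · rw [remainderSubsums_eq, remainderSubsums_eq]
    have h : {i : ℕ | n ≤ i} = {n} ∪ {i | n + 1 ≤ i} := by
      ext i; simp; omega
    rw [h]
    exact spectre_subsumsOver_mono x hs _ _ (by simp [Set.disjoint_left])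
  · rw [remainderSubsums_eq, achievementSet_eq]
    have h : (Set.univ : Set ℕ) = {i | i < n} ∪ {i | n ≤ i} := by
      ext i; simp [lt_or_ge]
    rw [h]
    exact spectre_subsumsOver_mono x hs _ _
      (by simp [Set.disjoint_left])
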